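/- The function f(z) = ∑_{n=0}^∞ e^{-z} z^n/n! · log(n!) (i.e. E[log N!] for N Poisson with complex parameter z) defines an analytic function on the region C_δ = {z ∈ ℂ : Re(z) > δ, |Im(z)| < δ} for every δ > 0; in particular, z ↦ E_{Poi(z)}[log N!] is real-analytic on (0, ∞). -/

import Mathlib

open FormalMultilinearSeries

/-- `log₂ n! ≤ n²`. -/
lemma logb_factorial_le_sq (n : ℕ) :
    Real.logb 2 n.factorial ≤ (n : ℝ) ^ 2 := by
  rcases Nat.eq_zero_or_pos n with h | h
  · subst h; simp
  have h1 : (n.factorial : ℝ) ≤ (n : ℝ) ^ n := by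
    exact_mod_cast Nat.factorial_le_pow n
  have h2 : Real.logb 2 n.factorial ≤ Real.logb 2 ((n : ℝ) ^ n) :=
    Real.logb_le_logb_of_le one_lt_two (by exact_mod_cast n.factorial_pos) h1
  have h3 : Real.logb 2 ((n : ℝ) ^ n) = n * Real.logb 2 (n : ℝ) := Real.logb_pow 2 (n:ℝ) n
  have h4 : Real.logb 2 (n : ℝ) ≤ n := by
    have : (n : ℝ) ≤ (2 : ℝ) ^ (n : ℕ) := by exact_mod_cast n.lt_two_pow_self.le
    calc Real.logb 2 (n : ℝ) ≤ Real.logb 2 ((2 : ℝ) ^ (n : ℕ)) :=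
          Real.logb_le_logb_of_le one_lt_two (by exact_mod_cast h) this
      _ = n := by
          rw [Real.logb_pow, Real.logb_self_eq_one one_lt_two, mul_one]
  calc Real.logb 2 n.factorial ≤ n * Real.logb 2 (n : ℝ) := h3 ▸ h2
    _ ≤ (n : ℝ) * n := by
        exact mul_le_mul_of_nonneg_left h4 (by positivity)
    _ = (n : ℝ) ^ 2 := (sq (n:ℝ)).symm

lemma summable_logb_factorial (r : ℝ) (hr : 0 ≤ r) :
    Summable (fun n : ℕ => Real.logb 2 n.factorial / n.factorial * r ^ n) := by
  apply (summable_nat_add_iff 2).mp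
  apply Summable.of_nonneg_of_le
    (f := fun n : ℕ => 2 * r ^ 2 * (r ^ n / n.factorial))
  · intro n
    have h1 : (1 : ℝ) ≤ (n + 2).factorial := by exact_mod_cast (n + 2).factorial_pos
    have := Real.logb_nonneg one_lt_two h1
    positivity
  · intro n
    have hfpos : (0 : ℝ) < n.factorial := by exact_mod_cast n.factorial_pos
    have hf2pos : (0 : ℝ) < (n + 2).factorial := by exact_mod_cast (n + 2).factorial_pos
    have hfe : ((n + 2).factorial : ℝ) = ((n : ℝ) + 2) * ((n : ℝ) + 1) * n.factorial := by
      rw [show n + 2 = (n + 1) + 1 from rfl, Nat.factorial_succ, Nat.factorial_succ]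
      push_cast; ring
    have key : Real.logb 2 (n + 2).factorial / (n + 2).factorial ≤ 2 / n.factorial := by
      have hlog : Real.logb 2 (n + 2).factorial ≤ ((n : ℝ) + 2) ^ 2 := by
        have := logb_factorial_le_sq (n + 2)
        push_cast at this ⊢; linarith
      rw [div_le_div_iff₀ hf2pos hfpos]
      calc Real.logb 2 (n + 2).factorial * n.factorial
          ≤ ((n : ℝ) + 2) ^ 2 * n.factorial :=
            mul_le_mul_of_nonneg_right hlog hfpos.le
        _ ≤ 2 * (n + 2).factorial := by rw [hfe]; nlinarith [hfpos]
    calc Real.logb 2 (n + 2).factorial / (n + 2).factorial * r ^ (n + 2)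
        ≤ 2 / n.factorial * r ^ (n + 2) :=
          mul_le_mul_of_nonneg_right key (pow_nonneg hr _)
      _ = 2 * r ^ 2 * (r ^ n / n.factorial) := by rw [pow_add]; ring
  · exact (Real.summable_pow_div_factorial r).mul_left _

/-- The power series `∑ (log₂ n!/n!) zⁿ` is analytic everywhere over `ℝ` or `ℂ`. -/
lemma aux_analytic {𝕜 : Type*} [RCLike 𝕜] :
    AnalyticOnNhd 𝕜
      (fun z : 𝕜 => ∑' n : ℕ,
        ((Real.logb 2 n.factorial / n.factorial : ℝ) : 𝕜) * z ^ n) Set.univ := by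
  set c : ℕ → 𝕜 := fun n => ((Real.logb 2 n.factorial / n.factorial : ℝ) : 𝕜) with hc
  set p := ofScalars 𝕜 c with hp
  have hrad : p.radius = ⊤ := by
    apply p.radius_eq_top_of_summable_norm
    intro r
    have : ∀ n : ℕ, ‖p n‖ * (r : ℝ) ^ n
        = Real.logb 2 n.factorial / n.factorial * (r : ℝ) ^ n := by
      intro n
      have h1 : (1 : ℝ) ≤ n.factorial := by exact_mod_cast n.factorial_pos
      have hnn : 0 ≤ Real.logb 2 n.factorial / n.factorial := by
        have := Real.logb_nonneg one_lt_two h1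
        positivity
      rw [hp, ofScalars_norm, hc]
      rw [RCLike.norm_ofReal, abs_of_nonneg hnn]
    rw [show (fun n : ℕ => ‖p n‖ * (r : ℝ) ^ n)
        = fun n : ℕ => Real.logb 2 n.factorial / n.factorial * (r : ℝ) ^ n
        from funext this]
    exact summable_logb_factorial r r.coe_nonneg
  have hball : HasFPowerSeriesOnBall p.sum p 0 p.radius :=
    p.hasFPowerSeriesOnBall (by rw [hrad]; exact ENNReal.zero_lt_top)
  have hsum : (fun z : 𝕜 => ∑' n : ℕ, c n * z ^ n) = p.sum := by
    funext z
    rw [hp, ← ofScalarsSum, ofScalars_sum_eq]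
    simp [smul_eq_mul]
  rw [show (fun z : 𝕜 => ∑' n : ℕ,
      ((Real.logb 2 n.factorial / n.factorial : ℝ) : 𝕜) * z ^ n) = p.sum from hsum]
  intro z _
  exact hball.analyticAt_of_mem (by rw [hrad]; exact edist_lt_top z 0)

/-- The function `z ↦ E_{Poi(z)}[log₂ N!] = ∑ₙ e^{-z} zⁿ/n! · log₂ n!` is
analytic on `C_δ = {z : Re z > δ, |Im z| < δ}` for every `δ > 0`; in
particular its real restriction is real-analytic on `(0, ∞)`. -/
theorem poisson_log_factorial_analytic :
    (∀ δ : ℝ, 0 < δ →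
      AnalyticOnNhd ℂ
        (fun z : ℂ => ∑' n : ℕ,
          Complex.exp (-z) * z ^ n / n.factorial * (Real.logb 2 n.factorial : ℂ))
        {z : ℂ | δ < z.re ∧ |z.im| < δ}) ∧
    AnalyticOnNhd ℝ
      (fun x : ℝ => ∑' n : ℕ,
        Real.exp (-x) * x ^ n / n.factorial * Real.logb 2 n.factorial)
      (Set.Ioi 0) := by
  have hC : AnalyticOnNhd ℂ
      (fun z : ℂ => ∑' n : ℕ,
        Complex.exp (-z) * z ^ n / n.factorial * (Real.logb 2 n.factorial : ℂ))
      Set.univ := by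
    have heq : (fun z : ℂ => ∑' n : ℕ,
        Complex.exp (-z) * z ^ n / n.factorial * (Real.logb 2 n.factorial : ℂ))
        = fun z : ℂ => Complex.exp (-z) * ∑' n : ℕ,
            ((Real.logb 2 n.factorial / n.factorial : ℝ) : ℂ) * z ^ n := by
      funext z
      rw [← tsum_mul_left]
      apply tsum_congr
      intro n
      have hf : ((n.factorial : ℝ) : ℂ) = (n.factorial : ℂ) := by push_cast; ring
      push_cast
      ring
    rw [heq]
    intro z _
    exact ((analyticAt_id.neg).cexp).mul (aux_analytic z (Set.mem_univ z))
  constructor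
  · intro δ _
    exact hC.mono (Set.subset_univ _)
  · have heq : (fun x : ℝ => ∑' n : ℕ,
        Real.exp (-x) * x ^ n / n.factorial * Real.logb 2 n.factorial)
        = fun x : ℝ => Real.exp (-x) * ∑' n : ℕ,
            ((Real.logb 2 n.factorial / n.factorial : ℝ) : ℝ) * x ^ n := by
      funext x
      rw [← tsum_mul_left]
      apply tsum_congr
      intro n
      have : (0:ℝ) < n.factorial := by exact_mod_cast n.factorial_pos
      field_simp
    rw [heq]
    have : AnalyticOnNhd ℝ (fun x : ℝ => Real.exp (-x) * ∑' n : ℕ,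
        ((Real.logb 2 n.factorial / n.factorial : ℝ) : ℝ) * x ^ n) Set.univ := by
      intro x _
      exact ((analyticAt_id.neg).rexp).mul (aux_analytic x (Set.mem_univ x))
    exact this.mono (Set.subset_univ _)
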